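/- arXiv:2101.06718 — 6 statements merged into one kernel-verified Lean document; each statement's English description precedes it below -/
import Mathlib

section
/- Let P be symmetric positive definite and M ∈ ℝ^{n×n}. Then MP + PMᵀ ≺ 0 if and only if there exists X ∈ ℝ^{n×n} such that the 2n×2n symmetric matrix [[0, P],[P, 0]] + He([[MX, MX],[-X, -X]]) is negative definite, where He(N) = N + Nᵀ. -/
open Matrix

/-- `He N = N + Nᵀ`. -/
def He {n : ℕ} (N : Matrix (Fin n ⊕ Fin n) (Fin n ⊕ Fin n) ℝ) :
    Matrix (Fin n ⊕ Fin n) (Fin n ⊕ Fin n) ℝ := N + Nᵀ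

private lemma dot_elim {n : ℕ} (z : Fin n ⊕ Fin n → ℝ) (a b : Fin n → ℝ) :
    z ⬝ᵥ Sum.elim a b = (z ∘ Sum.inl) ⬝ᵥ a + (z ∘ Sum.inr) ⬝ᵥ b := by
  calc z ⬝ᵥ Sum.elim a b = Sum.elim (z ∘ Sum.inl) (z ∘ Sum.inr) ⬝ᵥ Sum.elim a b := by
        rw [Sum.elim_comp_inl_inr]
    _ = _ := sumElim_dotProduct_sumElim _ _ _ _

private lemma dot_swap {n : ℕ} (A : Matrix (Fin n) (Fin n) ℝ) (x y : Fin n → ℝ) :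
    x ⬝ᵥ Aᵀ *ᵥ y = y ⬝ᵥ A *ᵥ x := by
  rw [dotProduct_mulVec, vecMul_transpose, dotProduct_comm]

private lemma dot_mul {n : ℕ} (A : Matrix (Fin n) (Fin n) ℝ) (x y : Fin n → ℝ) :
    x ⬝ᵥ A *ᵥ y = (Aᵀ *ᵥ x) ⬝ᵥ y := by
  rw [dotProduct_mulVec, mulVec_transpose]

private lemma dot_symm {n : ℕ} (P : Matrix (Fin n) (Fin n) ℝ) (hPs : Pᵀ = P)
    (a b : Fin n → ℝ) : a ⬝ᵥ P *ᵥ b = b ⬝ᵥ P *ᵥ a := by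
  have := dot_swap P a b
  rwa [hPs] at this

private lemma keyq {n : ℕ} (M P X : Matrix (Fin n) (Fin n) ℝ) (hPs : Pᵀ = P)
    (z : Fin n ⊕ Fin n → ℝ) :
    z ⬝ᵥ ((Matrix.fromBlocks 0 P P 0 +
        He (Matrix.fromBlocks (M * X) (M * X) (-X) (-X))) *ᵥ z) =
      2 * ((z ∘ Sum.inl) ⬝ᵥ P *ᵥ (z ∘ Sum.inr)) +
      2 * ((Mᵀ *ᵥ (z ∘ Sum.inl) - (z ∘ Sum.inr)) ⬝ᵥ X *ᵥ ((z ∘ Sum.inl) + (z ∘ Sum.inr))) := by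
  set u := z ∘ Sum.inl with hu
  set v := z ∘ Sum.inr with hv
  have e1 : v ⬝ᵥ P *ᵥ u = u ⬝ᵥ P *ᵥ v := by
    have := dot_swap P v u; rwa [hPs] at this
  have e2 : u ⬝ᵥ (M * X) *ᵥ u = (Mᵀ *ᵥ u) ⬝ᵥ X *ᵥ u := by
    rw [← mulVec_mulVec, dot_mul]
  have e3 : u ⬝ᵥ (M * X) *ᵥ v = (Mᵀ *ᵥ u) ⬝ᵥ X *ᵥ v := by
    rw [← mulVec_mulVec, dot_mul]
  have e4 : u ⬝ᵥ (Xᵀ * Mᵀ) *ᵥ u = (Mᵀ *ᵥ u) ⬝ᵥ X *ᵥ u := by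
    rw [← mulVec_mulVec, dot_swap]
  have e5 : v ⬝ᵥ (Xᵀ * Mᵀ) *ᵥ u = (Mᵀ *ᵥ u) ⬝ᵥ X *ᵥ v := by
    rw [← mulVec_mulVec, dot_swap]
  have e6 : u ⬝ᵥ Xᵀ *ᵥ v = v ⬝ᵥ X *ᵥ u := dot_swap X u v
  have e7 : v ⬝ᵥ Xᵀ *ᵥ v = v ⬝ᵥ X *ᵥ v := dot_swap X v v
  simp only [He, transpose_add, fromBlocks_transpose, transpose_neg, transpose_mul,
    add_mulVec, fromBlocks_mulVec, dotProduct_add, dot_elim, zero_mulVec, dotProduct_zero,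
    neg_mulVec, dotProduct_neg, mulVec_add, sub_dotProduct, zero_add, add_zero]
  linear_combination e1 + e2 + e3 + e4 + e5 - e6 - e7


private lemma herm_big {n : ℕ} (M P X : Matrix (Fin n) (Fin n) ℝ) (hPs : Pᵀ = P) :
    (-(Matrix.fromBlocks 0 P P 0 +
        He (Matrix.fromBlocks (M * X) (M * X) (-X) (-X)))).IsHermitian := by
  show _ᴴ = _
  rw [conjTranspose_eq_transpose_of_trivial]
  simp only [He, transpose_neg, transpose_add, fromBlocks_transpose, transpose_zero,
    transpose_transpose, hPs]
  abel

theorem stmt4 {n : ℕ} (M P : Matrix (Fin n) (Fin n) ℝ) (hP : P.PosDef) :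
    (-(M * P + P * Mᵀ)).PosDef ↔
      ∃ X : Matrix (Fin n) (Fin n) ℝ,
        (-(Matrix.fromBlocks 0 P P 0 +
            He (Matrix.fromBlocks (M * X) (M * X) (-X) (-X)))).PosDef := by
  have hPs : Pᵀ = P := by
    have := hP.1.eq; rwa [conjTranspose_eq_transpose_of_trivial] at this
  constructor
  · intro hQ
    set D : Matrix (Fin n) (Fin n) ℝ := 1 - M with hD
    have hDt : Dᵀ = 1 - Mᵀ := by rw [hD, transpose_sub, transpose_one]
    have hdet : IsUnit D.det := by
      rw [isUnit_iff_ne_zero]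
      intro h0
      have h0t : Dᵀ.det = 0 := by rw [det_transpose]; exact h0
      obtain ⟨y, hy0, hy⟩ := (Matrix.exists_mulVec_eq_zero_iff).mpr h0t
      have hMy : Mᵀ *ᵥ y = y := by
        rw [hDt, sub_mulVec, one_mulVec] at hy
        have := sub_eq_zero.mp hy
        exact this.symm
      have h1 : (0:ℝ) < star y ⬝ᵥ (-(M * P + P * Mᵀ)) *ᵥ y := hQ.dotProduct_mulVec_pos hy0
      have h2 : (0:ℝ) < star y ⬝ᵥ P *ᵥ y := hP.dotProduct_mulVec_pos hy0
      rw [star_trivial] at h1 h2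
      have h3 : y ⬝ᵥ (-(M * P + P * Mᵀ)) *ᵥ y = -(2 * (y ⬝ᵥ P *ᵥ y)) := by
        have a1 : y ⬝ᵥ (M * P) *ᵥ y = y ⬝ᵥ P *ᵥ y := by
          rw [← mulVec_mulVec, dot_mul M, hMy]
        have a2 : y ⬝ᵥ (P * Mᵀ) *ᵥ y = y ⬝ᵥ P *ᵥ y := by
          rw [← mulVec_mulVec, hMy]
        rw [neg_mulVec, dotProduct_neg, add_mulVec, dotProduct_add, a1, a2]; ring
      rw [h3] at h1
      linarith
    set X : Matrix (Fin n) (Fin n) ℝ := D⁻¹ * P with hX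
    have hDX : D * X = P := Matrix.mul_nonsing_inv_cancel_left D P hdet
    refine ⟨X, posDef_iff_dotProduct_mulVec.mpr ⟨herm_big M P X hPs, ?_⟩⟩
    intro z hz
    rw [star_trivial]
    set u := z ∘ Sum.inl with hu
    set v := z ∘ Sum.inr with hv
    have hdetT : IsUnit Dᵀ.det := by rwa [det_transpose]
    set w : Fin n → ℝ := Dᵀ⁻¹ *ᵥ (u - v) with hwdef
    have hw : Dᵀ *ᵥ w = u - v := by
      rw [hwdef, mulVec_mulVec, Matrix.mul_nonsing_inv _ hdetT, one_mulVec]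
    have hT : (Mᵀ *ᵥ u - v) ⬝ᵥ X *ᵥ (u + v) = (w - u) ⬝ᵥ P *ᵥ (u + v) := by
      have h1 : Mᵀ *ᵥ u - v = Dᵀ *ᵥ (w - u) := by
        rw [mulVec_sub, hw, hDt, sub_mulVec, one_mulVec]
        abel
      rw [h1, ← dot_mul D, mulVec_mulVec, hDX]
    have hveq : v = u - w + Mᵀ *ᵥ w := by
      have h := hw
      rw [hDt, sub_mulVec, one_mulVec] at h
      calc v = u - (u - v) := (sub_sub_cancel u v).symm
        _ = u - (w - Mᵀ *ᵥ w) := by rw [h]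
        _ = u - w + Mᵀ *ᵥ w := by abel
    have hfin : z ⬝ᵥ (-(Matrix.fromBlocks 0 P P 0 +
            He (Matrix.fromBlocks (M * X) (M * X) (-X) (-X)))) *ᵥ z
        = 2 * ((u - w) ⬝ᵥ P *ᵥ (u - w)) + w ⬝ᵥ (-(M * P + P * Mᵀ)) *ᵥ w := by
      rw [neg_mulVec, dotProduct_neg, keyq M P X hPs z, ← hu, ← hv, hT]
      rw [hveq]
      rw [show w ⬝ᵥ (-(M * P + P * Mᵀ)) *ᵥ w
          = -((Mᵀ *ᵥ w) ⬝ᵥ P *ᵥ w) - w ⬝ᵥ P *ᵥ (Mᵀ *ᵥ w) by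
        rw [neg_mulVec, dotProduct_neg, add_mulVec, dotProduct_add,
          ← mulVec_mulVec, ← mulVec_mulVec, dot_mul M]
        ring]
      simp only [mulVec_add, mulVec_sub, dotProduct_add, dotProduct_sub,
        sub_dotProduct, add_dotProduct]
      rw [dot_symm P hPs w u, dot_symm P hPs (Mᵀ *ᵥ w) w]
      ring
    rw [hfin]
    rcases eq_or_ne w 0 with hw0 | hw0
    · have huv : u = v := by
        rw [hw0, mulVec_zero] at hw
        exact sub_eq_zero.mp hw.symm
      have hu0 : u ≠ 0 := by
        intro h0
        apply hz
        funext i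
        cases i with
        | inl a => exact congrFun h0 a
        | inr a => exact congrFun (huv ▸ h0) a
      have h1 : (0:ℝ) < (u - w) ⬝ᵥ P *ᵥ (u - w) := by
        have := hP.dotProduct_mulVec_pos (x := u - w) (by rw [hw0, sub_zero]; exact hu0)
        rwa [star_trivial] at this
      have h2 : w ⬝ᵥ (-(M * P + P * Mᵀ)) *ᵥ w = 0 := by
        rw [hw0, zero_dotProduct]
      linarith
    · have h1 : (0:ℝ) ≤ (u - w) ⬝ᵥ P *ᵥ (u - w) := by
        have := hP.posSemidef.dotProduct_mulVec_nonneg (u - w)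
        rwa [star_trivial] at this
      have h2 : (0:ℝ) < w ⬝ᵥ (-(M * P + P * Mᵀ)) *ᵥ w := by
        have := hQ.dotProduct_mulVec_pos hw0
        rwa [star_trivial] at this
      linarith
  · rintro ⟨X, hN⟩
    refine posDef_iff_dotProduct_mulVec.mpr ⟨?_, ?_⟩
    · show _ᴴ = _
      rw [conjTranspose_eq_transpose_of_trivial]
      simp only [transpose_neg, transpose_add, transpose_mul, hPs, transpose_transpose]
      abel
    · intro x hx
      rw [star_trivial]
      set z : Fin n ⊕ Fin n → ℝ := Sum.elim x (Mᵀ *ᵥ x) with hzdef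
      have hz : z ≠ 0 := by
        intro h
        apply hx
        have hxz : x = z ∘ Sum.inl := by rw [hzdef, Sum.elim_comp_inl]
        rw [hxz, h]
        rfl
      have h1 := hN.dotProduct_mulVec_pos hz
      rw [star_trivial, neg_mulVec, dotProduct_neg] at h1
      have hk := keyq M P X hPs z
      rw [hzdef] at hk
      simp only [Sum.elim_comp_inl, Sum.elim_comp_inr, sub_self, zero_dotProduct,
        mul_zero, add_zero] at hk
      rw [← hzdef] at hk
      rw [hk] at h1
      have he : x ⬝ᵥ (-(M * P + P * Mᵀ)) *ᵥ x
          = -(2 * (x ⬝ᵥ P *ᵥ (Mᵀ *ᵥ x))) := by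
        rw [neg_mulVec, dotProduct_neg, add_mulVec, dotProduct_add,
          ← mulVec_mulVec, ← mulVec_mulVec, dot_mul M,
          dot_symm P hPs (Mᵀ *ᵥ x) x]
        ring
      rw [he]
      linarith
end

section
/- (Forward direction of the dilated LMI) If P is symmetric positive definite, M ∈ ℝ^{n×n}, X ∈ ℝ^{n×n}, and the 2n×2n symmetric matrix [[He(MX), P + MX - Xᵀ],[P + XᵀMᵀ - X, -X - Xᵀ]] is negative definite, then MP + PMᵀ ≺ 0. -/
open Matrix

theorem stmt5 {n : ℕ} (M P X : Matrix (Fin n) (Fin n) ℝ) (hP : P.PosDef)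
    (hLMI : (-(Matrix.fromBlocks 0 P P 0 +
        He (Matrix.fromBlocks (M * X) (M * X) (-X) (-X)))).PosDef) :
    (-(M * P + P * Mᵀ)).PosDef := by
  set S : Matrix (Fin n ⊕ Fin n) (Fin n ⊕ Fin n) ℝ :=
    -(Matrix.fromBlocks 0 P P 0 + He (Matrix.fromBlocks (M * X) (M * X) (-X) (-X))) with hS
  have hPsymm : Pᵀ = P := hP.1
  set E : Matrix (Fin n ⊕ Fin n) (Fin n ⊕ Fin n) ℝ := Matrix.fromBlocks 1 0 Mᵀ 0 with hE
  have key : Eᵀ * S * E = Matrix.fromBlocks (-(M * P + P * Mᵀ)) 0 0 0 := by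
    simp only [hS, hE, He, Matrix.fromBlocks_transpose, Matrix.transpose_add,
      Matrix.transpose_neg, Matrix.transpose_mul, Matrix.transpose_zero, Matrix.transpose_one,
      Matrix.transpose_transpose, hPsymm, Matrix.fromBlocks_add, Matrix.fromBlocks_neg,
      Matrix.fromBlocks_multiply]
    noncomm_ring
  refine Matrix.posDef_iff_dotProduct_mulVec.mpr ⟨?_, ?_⟩
  · show (-(M * P + P * Mᵀ))ᴴ = _
    have : (-(M * P + P * Mᵀ))ᴴ = (-(M * P + P * Mᵀ))ᵀ := by
      ext i j; simp [Matrix.conjTranspose_apply]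
    rw [this]
    simp only [Matrix.transpose_neg, Matrix.transpose_add, Matrix.transpose_mul,
      Matrix.transpose_transpose, hPsymm]
    rw [add_comm]
  · intro x hx
    have hy : E *ᵥ (Sum.elim x 0) = Sum.elim x (Mᵀ *ᵥ x) := by
      simp [hE, Matrix.fromBlocks_mulVec]
    have hyne : E *ᵥ (Sum.elim x 0) ≠ 0 := by
      rw [hy]
      intro h
      apply hx
      funext i
      have := congrFun h (Sum.inl i)
      simpa using this
    have h2 := hLMI.dotProduct_mulVec_pos hyne
    have heq : star (Sum.elim x (0 : Fin n → ℝ)) ⬝ᵥ (Eᵀ * S * E) *ᵥ (Sum.elim x 0)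
        = star (E *ᵥ Sum.elim x 0) ⬝ᵥ S *ᵥ (E *ᵥ Sum.elim x 0) := by
      have e1 : (Eᵀ * S * E) *ᵥ (Sum.elim x 0) = Eᵀ *ᵥ (S *ᵥ (E *ᵥ Sum.elim x 0)) := by
        rw [Matrix.mulVec_mulVec, Matrix.mulVec_mulVec, Matrix.mul_assoc]
      rw [e1, Matrix.dotProduct_mulVec, Matrix.vecMul_transpose]
      simp
    rw [key] at heq
    have h3 : star (Sum.elim x (0 : Fin n → ℝ)) ⬝ᵥ
        ((Matrix.fromBlocks (-(M * P + P * Mᵀ)) 0 0 0 :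
          Matrix (Fin n ⊕ Fin n) (Fin n ⊕ Fin n) ℝ)) *ᵥ (Sum.elim x 0)
        = star x ⬝ᵥ (-(M * P + P * Mᵀ)) *ᵥ x := by
      simp [Matrix.fromBlocks_mulVec, sumElim_dotProduct_sumElim]
    rw [← h3, heq]
    exact h2
end

section
/- Let A ∈ ℝ^{n×n}, B ∈ ℝ^{n×m}. Suppose there exist X ∈ ℝ^{n×n}, a symmetric positive definite P, and R ∈ ℝ^{m×n} such that [[0,P],[P,0]] + He([[AX+BR, AX+BR],[-X, -X]]) ≺ 0. Then X is invertible and A + B(RX⁻¹) is Hurwitz. -/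
open Matrix

/-- A real square matrix is Hurwitz if every complex eigenvalue has negative real part. -/
def Hurwitz {n : ℕ} (M : Matrix (Fin n) (Fin n) ℝ) : Prop :=
  ∀ z ∈ spectrum ℂ (M.map (Complex.ofReal)), z.re < 0

/-- Quadratic form congruence. -/
lemma quad_congr {p q : Type*} [Fintype p] [Fintype q]
    (E : Matrix p q ℝ) (N : Matrix p p ℝ) (v : q → ℝ) :
    (E *ᵥ v) ⬝ᵥ (N *ᵥ (E *ᵥ v)) = v ⬝ᵥ ((Eᵀ * N * E) *ᵥ v) := by
  rw [Matrix.mul_assoc, ← Matrix.mulVec_mulVec, Matrix.dotProduct_mulVec v,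
    Matrix.vecMul_transpose, ← Matrix.mulVec_mulVec]

/-- The complex quadratic form of a real positive definite matrix is a positive real. -/
lemma map_quad_pos {k : ℕ} {Q : Matrix (Fin k) (Fin k) ℝ} (hQ : Q.PosDef)
    (x : Fin k → ℂ) (hx : x ≠ 0) :
    ∃ r : ℝ, 0 < r ∧ star x ⬝ᵥ (Q.map Complex.ofReal *ᵥ x) = (r : ℂ) := by
  have hsym : Qᵀ = Q := by
    rw [← conjTranspose_eq_transpose_of_trivial]; exact hQ.1
  set a : Fin k → ℝ := fun i => (x i).re with ha
  set b : Fin k → ℝ := fun i => (x i).im with hb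
  set ca : Fin k → ℂ := Complex.ofRealHom ∘ a with hca
  set cb : Fin k → ℂ := Complex.ofRealHom ∘ b with hcb
  have hx2 : x = ca + Complex.I • cb := by
    funext i
    simp only [Pi.add_apply, Pi.smul_apply, smul_eq_mul, hca, hcb, Function.comp_apply,
      Complex.ofRealHom_eq_coe, ha, hb]
    rw [mul_comm, Complex.re_add_im]
  have hstar : star x = ca - Complex.I • cb := by
    funext i
    simp only [Pi.star_apply, Pi.sub_apply, Pi.smul_apply, smul_eq_mul, hca, hcb,
      Function.comp_apply, Complex.ofRealHom_eq_coe, ha, hb]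
    apply Complex.ext <;> simp
  have key : ∀ u w : Fin k → ℝ,
      (Complex.ofRealHom ∘ u) ⬝ᵥ (Q.map Complex.ofReal *ᵥ (Complex.ofRealHom ∘ w))
        = Complex.ofReal (u ⬝ᵥ (Q *ᵥ w)) := by
    intro u w
    have h1 : Complex.ofRealHom ∘ (Q *ᵥ w) = Q.map Complex.ofReal *ᵥ (Complex.ofRealHom ∘ w) := by
      funext i
      exact RingHom.map_mulVec Complex.ofRealHom Q w i
    rw [← h1, ← RingHom.map_dotProduct]
    rfl
  have hab : a ⬝ᵥ (Q *ᵥ b) = b ⬝ᵥ (Q *ᵥ a) := by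
    conv_lhs => rw [Matrix.dotProduct_mulVec, ← hsym, Matrix.vecMul_transpose]
    exact dotProduct_comm _ _
  have hcalc : star x ⬝ᵥ (Q.map Complex.ofReal *ᵥ x)
      = Complex.ofReal (a ⬝ᵥ (Q *ᵥ a) + b ⬝ᵥ (Q *ᵥ b)) := by
    rw [hstar, hx2]
    rw [Matrix.mulVec_add, Matrix.mulVec_smul]
    rw [dotProduct_add, sub_dotProduct, sub_dotProduct,
      dotProduct_smul, dotProduct_smul, smul_dotProduct,
      smul_dotProduct]
    rw [key, key, key, key, hab]
    simp only [smul_eq_mul, Complex.ofReal_add]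
    ring_nf
    rw [Complex.I_sq]
    ring
  have haborb : a ≠ 0 ∨ b ≠ 0 := by
    by_contra h
    push_neg at h
    apply hx
    funext i
    have h1 : a i = 0 := congrFun h.1 i
    have h2 : b i = 0 := congrFun h.2 i
    apply Complex.ext <;> simpa using by first | exact h1 | exact h2
  have hpos : 0 < a ⬝ᵥ (Q *ᵥ a) + b ⬝ᵥ (Q *ᵥ b) := by
    rcases haborb with h | h
    · have h1 := hQ.dotProduct_mulVec_pos h
      have h2 := hQ.posSemidef.dotProduct_mulVec_nonneg b
      simp only [star_trivial] at h1 h2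
      linarith
    · have h1 := hQ.posSemidef.dotProduct_mulVec_nonneg a
      have h2 := hQ.dotProduct_mulVec_pos h
      simp only [star_trivial] at h1 h2
      linarith
  exact ⟨_, hpos, hcalc⟩

/-- Lyapunov criterion. -/
lemma lyapunov {k : ℕ} {Ac P : Matrix (Fin k) (Fin k) ℝ} (hP : P.PosDef)
    (hQ : (-(Ac * P + P * Acᵀ)).PosDef) : Hurwitz Ac := by
  intro z hz
  rw [spectrum.mem_iff] at hz
  have hdet : (z • (1 : Matrix (Fin k) (Fin k) ℂ) - Ac.map Complex.ofReal).det = 0 := by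
    by_contra h
    apply hz
    rw [Algebra.algebraMap_eq_smul_one]
    exact (Matrix.isUnit_iff_isUnit_det _).mpr (isUnit_iff_ne_zero.mpr h)
  have htr : (z • (1 : Matrix (Fin k) (Fin k) ℂ) - Ac.map Complex.ofReal)ᵀ
      = z • (1 : Matrix (Fin k) (Fin k) ℂ) - Acᵀ.map Complex.ofReal := by
    rw [Matrix.transpose_sub, Matrix.transpose_smul, Matrix.transpose_one, Matrix.transpose_map]
  have hdetT : (z • (1 : Matrix (Fin k) (Fin k) ℂ) - Acᵀ.map Complex.ofReal).det = 0 := by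
    rw [← htr, Matrix.det_transpose]
    exact hdet
  obtain ⟨u, hu0, hu⟩ := Matrix.exists_mulVec_eq_zero_iff.mpr hdetT
  have huz : (Acᵀ.map Complex.ofReal) *ᵥ u = z • u := by
    have h1 : z • (1 : Matrix (Fin k) (Fin k) ℂ) *ᵥ u - Acᵀ.map Complex.ofReal *ᵥ u = 0 := by
      rw [← Matrix.smul_mulVec, ← Matrix.sub_mulVec]
      exact hu
    rw [Matrix.one_mulVec] at h1
    rw [← neg_sub, neg_eq_zero] at h1
    exact sub_eq_zero.mp h1
  obtain ⟨pr, hprpos, hp⟩ := map_quad_pos hP u hu0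
  obtain ⟨qr, hqrpos, hqeq⟩ := map_quad_pos hQ u hu0
  have hmap : (-(Ac * P + P * Acᵀ)).map Complex.ofReal
      = -((Ac.map Complex.ofReal) * P.map Complex.ofReal + P.map Complex.ofReal * (Acᵀ.map Complex.ofReal)) := by
    ext i j
    simp only [Matrix.map_apply, Matrix.neg_apply, Matrix.add_apply, Complex.ofReal_neg,
      Complex.ofReal_add]
    exact congrArg Neg.neg (congrArg₂ (· + ·)
      (RingHom.map_matrix_mul Ac P i j Complex.ofRealHom)
      (RingHom.map_matrix_mul P Acᵀ i j Complex.ofRealHom))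
  have hcT : (Acᵀ.map Complex.ofReal)ᴴ = Ac.map Complex.ofReal := by
    ext i j
    simp [Matrix.conjTranspose_apply, Matrix.map_apply, Complex.conj_ofReal]
  have h2 : star u ⬝ᵥ ((P.map Complex.ofReal * Acᵀ.map Complex.ofReal) *ᵥ u) = z * (pr : ℂ) := by
    rw [← Matrix.mulVec_mulVec, huz, Matrix.mulVec_smul, dotProduct_smul, smul_eq_mul, hp]
  have h1 : star u ⬝ᵥ ((Ac.map Complex.ofReal * P.map Complex.ofReal) *ᵥ u) = (starRingEnd ℂ) z * (pr : ℂ) := by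
    rw [← Matrix.mulVec_mulVec, Matrix.dotProduct_mulVec]
    have hv : star u ᵥ* Ac.map Complex.ofReal = star (z • u) := by
      rw [← huz, Matrix.star_mulVec, hcT]
    rw [hv, star_smul, smul_dotProduct, hp]
    simp [smul_eq_mul, Complex.star_def]
  have hkey : (z + (starRingEnd ℂ) z) * (pr : ℂ) = -(qr : ℂ) := by
    have h3 := hqeq
    rw [hmap, Matrix.neg_mulVec, dotProduct_neg, Matrix.add_mulVec, dotProduct_add,
      h1, h2] at h3
    linear_combination -h3
  have hre : 2 * z.re * pr = -qr := by
    have h3 : ((2 * z.re * pr : ℝ) : ℂ) = ((-qr : ℝ) : ℂ) := by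
      push_cast
      rw [← hkey, Complex.add_conj]
      push_cast
      ring
    exact_mod_cast h3
  nlinarith

theorem stmt7 {n m : ℕ} (A : Matrix (Fin n) (Fin n) ℝ) (B : Matrix (Fin n) (Fin m) ℝ)
    (X P : Matrix (Fin n) (Fin n) ℝ) (R : Matrix (Fin m) (Fin n) ℝ)
    (hP : P.PosDef)
    (hLMI : (-(Matrix.fromBlocks 0 P P 0 +
        He (Matrix.fromBlocks (A * X + B * R) (A * X + B * R) (-X) (-X)))).PosDef) :
    IsUnit X.det ∧ Hurwitz (A + B * (R * X⁻¹)) := by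
  set S := A * X + B * R with hS
  have hMb : (-(Matrix.fromBlocks 0 P P 0 +
        He (Matrix.fromBlocks S S (-X) (-X))))
      = Matrix.fromBlocks (-(S + Sᵀ)) (-(P + (S + (-X)ᵀ))) (-(P + (Sᵀ + -X))) (X + Xᵀ) := by
    rw [He, Matrix.fromBlocks_transpose, Matrix.fromBlocks_add, Matrix.fromBlocks_add,
      Matrix.fromBlocks_neg, Matrix.fromBlocks_inj]
    refine ⟨by abel, by abel, by abel, ?_⟩
    simp [Matrix.transpose_neg]
    try abel
  rw [hMb] at hLMI
  -- Step 1: X is invertible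
  have hXX : (X + Xᵀ).PosDef := by
    refine PosDef.of_dotProduct_mulVec_pos ?_ ?_
    · rw [IsHermitian, conjTranspose_eq_transpose_of_trivial, Matrix.transpose_add,
        Matrix.transpose_transpose, add_comm]
    · intro v hv
      have hne : Sum.elim (0 : Fin n → ℝ) v ≠ 0 := by
        intro hcon
        exact hv (funext fun i => congrFun hcon (Sum.inr i))
      have h := hLMI.dotProduct_mulVec_pos hne
      simpa [Matrix.fromBlocks_mulVec, sumElim_dotProduct_sumElim] using h
  have hXdet : IsUnit X.det := by
    rw [isUnit_iff_ne_zero]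
    intro h
    obtain ⟨v, hv0, hv⟩ := Matrix.exists_mulVec_eq_zero_iff.mpr h
    have hp := hXX.dotProduct_mulVec_pos hv0
    rw [star_trivial, Matrix.add_mulVec, hv, dotProduct_add, Matrix.dotProduct_mulVec,
      Matrix.vecMul_transpose, hv] at hp
    simp at hp
  refine ⟨hXdet, ?_⟩
  -- Step 2: Lyapunov
  set Ac := A + B * (R * X⁻¹) with hAc
  have hSX : S = Ac * X := by
    rw [hS, hAc, add_mul, Matrix.mul_assoc B, Matrix.mul_assoc R,
      Matrix.nonsing_inv_mul X hXdet, Matrix.mul_one]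
  apply lyapunov hP
  refine PosDef.of_dotProduct_mulVec_pos ?_ ?_
  · rw [IsHermitian, conjTranspose_eq_transpose_of_trivial]
    have hPt : Pᵀ = P := by
      rw [← conjTranspose_eq_transpose_of_trivial]; exact hP.1
    rw [Matrix.transpose_neg, Matrix.transpose_add, Matrix.transpose_mul, Matrix.transpose_mul,
      Matrix.transpose_transpose, hPt, add_comm]
  · intro v hv
    have hne : (Matrix.fromRows (1 : Matrix (Fin n) (Fin n) ℝ) Acᵀ) *ᵥ v ≠ 0 := by
      intro hcon
      apply hv
      have := congrFun hcon
      funext i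
      have h1 := this (Sum.inl i)
      simpa [Matrix.fromRows_mulVec] using h1
    have h := hLMI.dotProduct_mulVec_pos hne
    rw [star_trivial, quad_congr] at h
    have hE : (Matrix.fromRows (1 : Matrix (Fin n) (Fin n) ℝ) Acᵀ)ᵀ *
        Matrix.fromBlocks (-(S + Sᵀ)) (-(P + (S + (-X)ᵀ))) (-(P + (Sᵀ + -X))) (X + Xᵀ) *
        Matrix.fromRows (1 : Matrix (Fin n) (Fin n) ℝ) Acᵀ
        = -(Ac * P + P * Acᵀ) := by
      rw [Matrix.transpose_fromRows, Matrix.transpose_one, Matrix.transpose_transpose,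
        Matrix.fromCols_mul_fromBlocks, Matrix.fromCols_mul_fromRows]
      rw [hSX, Matrix.transpose_neg, Matrix.transpose_mul]
      have hPt : Pᵀ = P := by
        rw [← conjTranspose_eq_transpose_of_trivial]; exact hP.1
      noncomm_ring
    rw [hE] at h
    rw [star_trivial]
    have hx0 : Matrix.fromRows (1 : Matrix (Fin n) (Fin n) ℝ) Acᵀ *ᵥ v
        = Sum.elim v (Acᵀ *ᵥ v) := by
      rw [Matrix.fromRows_mulVec, Matrix.one_mulVec]
    exact h
end

section
/- (Main theorem) Let S = span{S₁,…,S_k} ⊆ ℝ^{m×n}, L = [S₁|⋯|S_k], and Υ = {Q : ∃ invertible Λ ∈ ℝ^{k×k}, L(I_k ⊗ Q) = L(Λ ⊗ I_n)}. Suppose there exist a symmetric positive definite P, R ∈ S, and a nonsingular X ∈ Υ such that [[0,P],[P,0]] + He([[AX+BR, AX+BR],[-X,-X]]) ≺ 0. Then K = RX⁻¹ satisfies K ∈ S and A + BK is Hurwitz. -/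
open Matrix Kronecker
open scoped ComplexOrder

noncomputable def cvec {n : ℕ} (v : Fin n → ℝ) : Fin n → ℂ := fun i => (v i : ℂ)

lemma cdot {n : ℕ} (a b : Fin n → ℝ) :
    ((a ⬝ᵥ b : ℝ) : ℂ) = cvec a ⬝ᵥ cvec b := by
  exact RingHom.map_dotProduct Complex.ofRealHom a b

lemma cmulVec {n : ℕ} (M : Matrix (Fin n) (Fin n) ℝ) (v : Fin n → ℝ) :
    (M.map Complex.ofReal) *ᵥ cvec v = cvec (M *ᵥ v) := by
  ext i
  exact (RingHom.map_mulVec Complex.ofRealHom M v i).symm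

lemma star_cvec {n : ℕ} (v : Fin n → ℝ) : star (cvec v) = cvec v := by
  ext i; simp [cvec]

lemma cvec_decomp {n : ℕ} (x : Fin n → ℂ) :
    x = cvec (fun i => (x i).re) + Complex.I • cvec (fun i => (x i).im) := by
  ext i
  simp only [cvec, Pi.add_apply, Pi.smul_apply, smul_eq_mul]
  rw [mul_comm]
  exact (Complex.re_add_im (x i)).symm

lemma quad_real {n : ℕ} {M : Matrix (Fin n) (Fin n) ℝ} (hsymm : Mᵀ = M) (x : Fin n → ℂ) :
    star x ⬝ᵥ ((M.map Complex.ofReal) *ᵥ x) =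
      (((fun i => (x i).re) ⬝ᵥ (M *ᵥ fun i => (x i).re)
        + (fun i => (x i).im) ⬝ᵥ (M *ᵥ fun i => (x i).im) : ℝ) : ℂ) := by
  set a : Fin n → ℝ := fun i => (x i).re
  set b : Fin n → ℝ := fun i => (x i).im
  have hx : x = cvec a + Complex.I • cvec b := cvec_decomp x
  have hsym : b ⬝ᵥ (M *ᵥ a) = a ⬝ᵥ (M *ᵥ b) := by
    nth_rewrite 1 [← hsymm]
    rw [Matrix.mulVec_transpose, dotProduct_comm, ← Matrix.dotProduct_mulVec]
  rw [hx]
  simp only [star_add, star_smul, star_cvec, Matrix.mulVec_add, Matrix.mulVec_smul,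
    add_dotProduct, dotProduct_add, smul_dotProduct,
    dotProduct_smul, cmulVec, ← cdot, Complex.star_def, Complex.conj_I]
  push_cast
  rw [hsym]
  simp only [smul_eq_mul]
  ring_nf
  rw [Complex.I_sq]
  ring

lemma posdef_map {n : ℕ} {M : Matrix (Fin n) (Fin n) ℝ} (hM : M.PosDef) :
    (M.map Complex.ofReal).PosDef := by
  obtain ⟨hherm, hpos⟩ := Matrix.posDef_iff_dotProduct_mulVec.mp hM
  have hsymm : Mᵀ = M := hherm
  rw [Matrix.posDef_iff_dotProduct_mulVec]
  constructor
  · ext i j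
    simp only [Matrix.conjTranspose_apply, Matrix.map_apply, Complex.star_def,
      Complex.conj_ofReal]
    exact congrArg Complex.ofReal (congrFun (congrFun hherm i) j)
  · intro x hx
    rw [quad_real hsymm x]
    set a : Fin n → ℝ := fun i => (x i).re
    set b : Fin n → ℝ := fun i => (x i).im
    have hab : a ≠ 0 ∨ b ≠ 0 := by
      by_contra h
      push_neg at h
      apply hx
      ext i
      have ha := congrFun h.1 i
      have hb := congrFun h.2 i
      simp [a, b] at ha hb
      exact Complex.ext ha hb
    have hM' : M.PosDef := Matrix.posDef_iff_dotProduct_mulVec.mpr ⟨hherm, hpos⟩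
    have hsd := hM'.posSemidef
    have : 0 < a ⬝ᵥ (M *ᵥ a) + b ⬝ᵥ (M *ᵥ b) := by
      rcases hab with h | h
      · have h1 := hpos h
        have h2 := hsd.dotProduct_mulVec_nonneg b
        simp at h1 h2
        linarith
      · have h1 := hsd.dotProduct_mulVec_nonneg a
        have h2 := hpos h
        simp at h1 h2
        linarith
    exact_mod_cast Complex.zero_lt_real.mpr this


lemma quad_block {n : ℕ} (N11 N12 N21 N22 Ac : Matrix (Fin n) (Fin n) ℝ) (x : Fin n → ℝ) :
    Sum.elim x (Acᵀ *ᵥ x) ⬝ᵥ ((Matrix.fromBlocks N11 N12 N21 N22) *ᵥ Sum.elim x (Acᵀ *ᵥ x))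
      = x ⬝ᵥ ((N11 + N12 * Acᵀ + Ac * N21 + Ac * N22 * Acᵀ) *ᵥ x) := by
  rw [Matrix.fromBlocks_mulVec, sumElim_dotProduct_sumElim]
  have hz : ∀ w, (Acᵀ *ᵥ x) ⬝ᵥ w = x ⬝ᵥ (Ac *ᵥ w) := fun w => by
    rw [Matrix.mulVec_transpose, ← Matrix.dotProduct_mulVec]
  rw [hz]
  simp only [Matrix.mulVec_add, dotProduct_add, Matrix.add_mulVec,
    ← Matrix.mulVec_mulVec, Matrix.mul_assoc]
  abel

lemma lmi_to_lyap {n : ℕ} (Ac P X : Matrix (Fin n) (Fin n) ℝ) (hPsym : Pᵀ = P)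
    (hLMI : (-(Matrix.fromBlocks 0 P P 0 +
        He (Matrix.fromBlocks (Ac * X) (Ac * X) (-X) (-X)))).PosDef) :
    (-(Ac * P + P * Acᵀ)).PosDef := by
  rw [Matrix.posDef_iff_dotProduct_mulVec]
  constructor
  · unfold Matrix.IsHermitian
    rw [Matrix.conjTranspose_eq_transpose_of_trivial]
    rw [Matrix.transpose_neg, Matrix.transpose_add, Matrix.transpose_mul, Matrix.transpose_mul,
      Matrix.transpose_transpose, hPsym]
    rw [add_comm]
  · intro x hx
    have hy : Sum.elim x (Acᵀ *ᵥ x) ≠ 0 := by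
      intro h
      exact hx (funext fun i => congrFun h (Sum.inl i))
    have h := hLMI.dotProduct_mulVec_pos hy
    have hblocks : -(Matrix.fromBlocks 0 P P 0 +
        He (Matrix.fromBlocks (Ac * X) (Ac * X) (-X) (-X))) =
        Matrix.fromBlocks (-(Ac * X) - (Ac * X)ᵀ) (-P - Ac * X + Xᵀ)
          (-P - (Ac * X)ᵀ + X) (X + Xᵀ) := by
      simp only [He, Matrix.fromBlocks_transpose, Matrix.fromBlocks_add, Matrix.fromBlocks_neg,
        Matrix.transpose_neg]
      congr 1 <;> abel
    simp only [star_trivial] at h ⊢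
    rw [hblocks, quad_block] at h
    have hid : (-(Ac * X) - (Ac * X)ᵀ) + (-P - Ac * X + Xᵀ) * Acᵀ +
        Ac * (-P - (Ac * X)ᵀ + X) + Ac * (X + Xᵀ) * Acᵀ = -(Ac * P + P * Acᵀ) := by
      simp only [Matrix.transpose_mul]
      noncomm_ring
    rw [hid] at h
    exact h


lemma lyapunov_s10 {n : ℕ} {M P : Matrix (Fin n) (Fin n) ℝ} (hP : P.PosDef)
    (hQ : (-(M * P + P * Mᵀ)).PosDef)
    (hposmap : ∀ (N : Matrix (Fin n) (Fin n) ℝ), N.PosDef → (N.map Complex.ofReal).PosDef) :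
    Hurwitz M := by
  intro z hz
  set Mc := M.map Complex.ofReal with hMc
  -- get left eigenvector
  have hdet : (z • (1 : Matrix (Fin n) (Fin n) ℂ) - Mc).det = 0 := by
    rw [spectrum.mem_iff] at hz
    by_contra h
    have h2 : IsUnit (z • (1 : Matrix (Fin n) (Fin n) ℂ) - Mc).det := isUnit_iff_ne_zero.mpr h
    have halg : (algebraMap ℂ (Matrix (Fin n) (Fin n) ℂ)) z = z • (1 : Matrix (Fin n) (Fin n) ℂ) := by
      ext i j
      simp [Matrix.algebraMap_matrix_apply, Matrix.one_apply, Matrix.smul_apply]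
    rw [halg] at hz
    exact hz ((Matrix.isUnit_iff_isUnit_det _).mpr h2)
  have hdetT : (z • (1 : Matrix (Fin n) (Fin n) ℂ) - Mcᵀ).det = 0 := by
    have : (z • (1 : Matrix (Fin n) (Fin n) ℂ) - Mcᵀ) = (z • 1 - Mc)ᵀ := by
      simp [Matrix.transpose_smul]
    rw [this, Matrix.det_transpose]; exact hdet
  obtain ⟨v, hv0, hv⟩ := (Matrix.exists_mulVec_eq_zero_iff).mpr hdetT
  have heig : Mcᵀ *ᵥ v = z • v := by
    have := hv
    rw [Matrix.sub_mulVec, sub_eq_zero] at this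
    rw [← this]
    simp [Matrix.smul_mulVec]
  set Pc := P.map Complex.ofReal with hPc
  set Q := -(M * P + P * Mᵀ) with hQdef
  set Qc := Q.map Complex.ofReal with hQc
  have hPcpos := hposmap P hP
  have hQcpos := hposmap Q hQ
  have hs := hPcpos.dotProduct_mulVec_pos hv0
  have hq := hQcpos.dotProduct_mulVec_pos hv0
  set s := star v ⬝ᵥ (Pc *ᵥ v) with hsdef
  -- key computation
  have hMcH : Mcᵀᴴ = Mc := by
    ext i j
    simp [Matrix.conjTranspose_apply, hMc, Matrix.map_apply]
  have hleft : star v ᵥ* Mc = (starRingEnd ℂ z) • star v := by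
    have h1 : star (Mcᵀ *ᵥ v) = star v ᵥ* Mcᵀᴴ := Matrix.star_mulVec _ _
    rw [heig, hMcH] at h1
    rw [← h1]
    simp
  have hQcEq : Qc = -(Mc * Pc + Pc * Mcᵀ) := by
    rw [hQc, hQdef]
    ext i j
    simp [Matrix.map_apply, Matrix.mul_apply, Matrix.neg_apply, Matrix.add_apply,
      Matrix.transpose_apply, hMc, hPc]
  have hkey : star v ⬝ᵥ (Qc *ᵥ v) = -((z + starRingEnd ℂ z) * s) := by
    rw [hQcEq]
    rw [Matrix.neg_mulVec, dotProduct_neg, Matrix.add_mulVec, dotProduct_add]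
    congr 1
    rw [← Matrix.mulVec_mulVec, ← Matrix.mulVec_mulVec, heig, Matrix.mulVec_smul,
      dotProduct_smul, Matrix.dotProduct_mulVec, hleft, smul_dotProduct]
    rw [hsdef, Matrix.dotProduct_mulVec]
    ring_nf
  -- extract real parts
  have hsre : 0 < s.re ∧ s.im = 0 := by
    have h := Complex.lt_def.mp hs
    simp at h
    exact ⟨h.1, h.2.symm⟩
  have hqre : 0 < (star v ⬝ᵥ (Qc *ᵥ v)).re := by
    have := Complex.lt_def.mp hq
    simpa using this.1
  rw [hkey] at hqre
  have : ((z + starRingEnd ℂ z) * s).re = 2 * z.re * s.re := by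
    rw [Complex.add_conj]
    simp [Complex.ofReal_mul, Complex.mul_re, hsre.2]
  rw [Complex.neg_re, this] at hqre
  nlinarith [hsre.1]


lemma span_step {m n k : ℕ}
    (S : Fin k → Matrix (Fin m) (Fin n) ℝ)
    (L : Matrix (Fin m) (Fin k × Fin n) ℝ)
    (hL : L = Matrix.of fun i p => S p.1 i p.2)
    (X : Matrix (Fin n) (Fin n) ℝ) (R : Matrix (Fin m) (Fin n) ℝ)
    (hR : R ∈ Submodule.span ℝ (Set.range S))
    (Λ : Matrix (Fin k) (Fin k) ℝ) (hΛdet : IsUnit Λ.det)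
    (hmat : L * ((1 : Matrix (Fin k) (Fin k) ℝ) ⊗ₖ X) =
        L * (Λ ⊗ₖ (1 : Matrix (Fin n) (Fin n) ℝ)))
    (hXinv : IsUnit X.det) :
    R * X⁻¹ ∈ Submodule.span ℝ (Set.range S) := by
  have key : ∀ p, S p * X = ∑ j, Λ j p • S j := by
    intro p
    ext i c
    have h := congrFun (congrFun hmat i) (p, c)
    simp [Matrix.mul_apply, Matrix.kroneckerMap_apply, hL, Fintype.sum_prod_type,
      Matrix.one_apply, mul_comm] at h
    rw [Matrix.mul_apply, Matrix.sum_apply]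
    simp only [Matrix.smul_apply, smul_eq_mul]
    rw [h]
    exact Finset.sum_congr rfl fun j _ => mul_comm _ _
  have h2 : ∀ p, S p = ∑ j, Λ j p • (S j * X⁻¹) := by
    intro p
    have hc : S p * X * X⁻¹ = S p := Matrix.mul_nonsing_inv_cancel_right _ _ hXinv
    rw [← hc, key p, Matrix.sum_mul]
    exact Finset.sum_congr rfl fun j _ => Matrix.smul_mul _ _ _
  have hXi : ∀ p, S p * X⁻¹ ∈ Submodule.span ℝ (Set.range S) := by
    intro p
    have h3 : S p * X⁻¹ = ∑ j, Λ⁻¹ j p • S j := by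
      have hcalc : ∑ j, Λ⁻¹ j p • S j = ∑ j, Λ⁻¹ j p • (∑ q, Λ q j • (S q * X⁻¹)) :=
        Finset.sum_congr rfl fun j _ => by rw [← h2 j]
      rw [hcalc]
      simp_rw [Finset.smul_sum, smul_smul]
      rw [Finset.sum_comm]
      have h4 : ∀ q, ∑ j, (Λ⁻¹ j p * Λ q j) • (S q * X⁻¹) = ((Λ * Λ⁻¹) q p) • (S q * X⁻¹) := by
        intro q
        rw [← Finset.sum_smul, Matrix.mul_apply]
        congr 1
        exact Finset.sum_congr rfl fun j _ => mul_comm _ _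
      simp_rw [h4]
      rw [Matrix.mul_nonsing_inv _ hΛdet]
      simp [Matrix.one_apply]
    rw [h3]
    exact Submodule.sum_mem _ fun j _ => Submodule.smul_mem _ _ (Submodule.subset_span ⟨j, rfl⟩)
  rw [Submodule.mem_span_range_iff_exists_fun] at hR
  obtain ⟨c, hc⟩ := hR
  have : R * X⁻¹ = ∑ j, c j • (S j * X⁻¹) := by
    rw [← hc, Matrix.sum_mul]
    exact Finset.sum_congr rfl fun j _ => Matrix.smul_mul _ _ _
  rw [this]
  exact Submodule.sum_mem _ fun j _ => Submodule.smul_mem _ _ (hXi j)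


theorem stmt10 {m n k : ℕ} (A : Matrix (Fin n) (Fin n) ℝ) (B : Matrix (Fin n) (Fin m) ℝ)
    (S : Fin k → Matrix (Fin m) (Fin n) ℝ) (hbasis : LinearIndependent ℝ S)
    (L : Matrix (Fin m) (Fin k × Fin n) ℝ)
    (hL : L = Matrix.of fun i p => S p.1 i p.2)
    (Υ : Set (Matrix (Fin n) (Fin n) ℝ))
    (hΥ : Υ = {Q | ∃ Λ : Matrix (Fin k) (Fin k) ℝ, IsUnit Λ.det ∧
        L * ((1 : Matrix (Fin k) (Fin k) ℝ) ⊗ₖ Q) =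
        L * (Λ ⊗ₖ (1 : Matrix (Fin n) (Fin n) ℝ))})
    (P X : Matrix (Fin n) (Fin n) ℝ) (R : Matrix (Fin m) (Fin n) ℝ)
    (hP : P.PosDef) (hR : R ∈ Submodule.span ℝ (Set.range S))
    (hX : X ∈ Υ) (hXinv : IsUnit X.det)
    (hLMI : (-(Matrix.fromBlocks 0 P P 0 +
        He (Matrix.fromBlocks (A * X + B * R) (A * X + B * R) (-X) (-X)))).PosDef) :
    R * X⁻¹ ∈ Submodule.span ℝ (Set.range S) ∧ Hurwitz (A + B * (R * X⁻¹)) := by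
  rw [hΥ] at hX
  obtain ⟨Λ, hΛdet, hmat⟩ := hX
  constructor
  · exact span_step S L hL X R hR Λ hΛdet hmat hXinv
  · set Ac := A + B * (R * X⁻¹) with hAc
    have hPsym : Pᵀ = P := by
      have h : Pᴴ = P := hP.1
      rwa [Matrix.conjTranspose_eq_transpose_of_trivial] at h
    have hF : Ac * X = A * X + B * R := by
      rw [hAc, Matrix.add_mul, Matrix.mul_assoc,
        Matrix.nonsing_inv_mul_cancel_right _ _ hXinv]
    have hLMI' := hLMI
    rw [← hF] at hLMI'
    exact lyapunov_s10 hP (lmi_to_lyap Ac P X hPsym hLMI') (fun N hN => posdef_map hN)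
end

section
/- Let B ∈ ℝ^{3×2} be the matrix with rows (1,0), (0,1), (1,1), and let Υ be the structure set of the subspace S = {[[a,0,b],[0,c,d]] : a,b,c,d ∈ ℝ}. Then every Q ∈ Υ satisfies q₁₂ = q₂₁ = q₃₁ = q₃₂ = 0, i.e., Q has the form [[q₁₁,0,q₁₃],[0,q₂₂,q₂₃],[0,0,q₃₃]]. -/
open Matrix Kronecker

theorem stmt11
    (S : Fin 4 → Matrix (Fin 2) (Fin 3) ℝ)
    (hS : S = ![!![1,0,0;0,0,0], !![0,0,1;0,0,0], !![0,0,0;0,1,0], !![0,0,0;0,0,1]])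
    (L : Matrix (Fin 2) (Fin 4 × Fin 3) ℝ)
    (hL : L = Matrix.of fun i p => S p.1 i p.2)
    (Q : Matrix (Fin 3) (Fin 3) ℝ)
    (hQ : ∃ Λ : Matrix (Fin 4) (Fin 4) ℝ, IsUnit Λ.det ∧
        L * ((1 : Matrix (Fin 4) (Fin 4) ℝ) ⊗ₖ Q) =
        L * (Λ ⊗ₖ (1 : Matrix (Fin 3) (Fin 3) ℝ))) :
    Q 0 1 = 0 ∧ Q 1 0 = 0 ∧ Q 2 0 = 0 ∧ Q 2 1 = 0 := by
  obtain ⟨Λ, -, heq⟩ := hQ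
  subst hS hL
  refine ⟨?_, ?_, ?_, ?_⟩
  · have h := congrFun (congrFun heq 0) (0, 1)
    simpa [Matrix.mul_apply, Fintype.sum_prod_type, Fin.sum_univ_succ,
      Matrix.one_apply] using h
  · have h := congrFun (congrFun heq 1) (2, 0)
    simpa [Matrix.mul_apply, Fintype.sum_prod_type, Fin.sum_univ_succ,
      Matrix.one_apply] using h
  · have h := congrFun (congrFun heq 1) (3, 0)
    simpa [Matrix.mul_apply, Fintype.sum_prod_type, Fin.sum_univ_succ,
      Matrix.one_apply] using h
  · have h := congrFun (congrFun heq 0) (1, 1)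
    simpa [Matrix.mul_apply, Fintype.sum_prod_type, Fin.sum_univ_succ,
      Matrix.one_apply] using h
end

section
/- Let A = diag(0, 0.1, 0) ∈ ℝ^{3×3} and B ∈ ℝ^{3×2} with rows (1,0), (0,1), (1,1). For every diagonal matrix W = diag(w₁,w₂,w₃) with w₁,w₂,w₃ > 0 and every γ ∈ ℝ, the matrix Γ = AW + WAᵀ - 2γBBᵀ is not negative definite. -/
open Matrix

theorem stmt13 (w₁ w₂ w₃ γ : ℝ) (hw₁ : 0 < w₁) (hw₂ : 0 < w₂) (hw₃ : 0 < w₃) :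
    ¬ (-(( !![(0:ℝ),0,0;0,0.1,0;0,0,0] * Matrix.diagonal ![w₁, w₂, w₃]
          + Matrix.diagonal ![w₁, w₂, w₃] * (!![(0:ℝ),0,0;0,0.1,0;0,0,0])ᵀ)
          - (2 * γ) • (!![(1:ℝ),0;0,1;1,1] * (!![(1:ℝ),0;0,1;1,1])ᵀ))).PosDef := by
  intro h
  have hx : (![1,1,-1] : Fin 3 → ℝ) ≠ 0 := by
    intro hx
    have := congrFun hx 0
    simp at this
  have hpos := h.dotProduct_mulVec_pos hx
  simp [Matrix.mul_apply, Matrix.mulVec, Matrix.vecMul, dotProduct, Fin.sum_univ_succ,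
    Matrix.diagonal, Matrix.vecHead, Matrix.vecTail, Matrix.transpose_apply,
    Matrix.cons_val_zero, Matrix.cons_val_one, Matrix.head_cons, Function.comp] at hpos
  nlinarith
end
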